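/- For every regular language L over Σ (i.e., L = L(r) for some regular expression r), there is an NFA with at most |r| + 1 states accepting L, where |r| is the syntactic size of r. -/

import Mathlib

open RegularExpression

/-- The acceptance predicate √ on regular expressions. -/
inductive Surd {α : Type} : RegularExpression α → Prop
  | eps : Surd 1
  | star (r : RegularExpression α) : Surd (RegularExpression.star r)
  | plusL {r₁ r₂ : RegularExpression α} : Surd r₁ → Surd (r₁ + r₂)
  | plusR {r₁ r₂ : RegularExpression α} : Surd r₂ → Surd (r₁ + r₂)
  | comp {r₁ r₂ : RegularExpression α} : Surd r₁ → Surd r₂ → Surd (r₁ * r₂)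

/-- The SOS transition relation r —a→ r'. -/
inductive Deriv {α : Type} : RegularExpression α → α → RegularExpression α → Prop
  | char (a : α) : Deriv (RegularExpression.char a) a 1
  | plusL {r₁ r₂ r₁' : RegularExpression α} {a : α} :
      Deriv r₁ a r₁' → Deriv (r₁ + r₂) a r₁'
  | plusR {r₁ r₂ r₂' : RegularExpression α} {a : α} :
      Deriv r₂ a r₂' → Deriv (r₁ + r₂) a r₂'
  | compL {r₁ r₂ r₁' : RegularExpression α} {a : α} :
      Deriv r₁ a r₁' → Deriv (r₁ * r₂) a (r₁' * r₂)
  | compR {r₁ r₂ r₂' : RegularExpression α} {a : α} :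
      Surd r₁ → Deriv r₂ a r₂' → Deriv (r₁ * r₂) a r₂'
  | star {r r'' : RegularExpression α} {a : α} :
      Deriv r a r'' → Deriv (RegularExpression.star r) a (r'' * RegularExpression.star r)

/-- Multi-step transitions labelled by a word. -/
inductive Derivs {α : Type} : RegularExpression α → List α → RegularExpression α → Prop
  | nil (r : RegularExpression α) : Derivs r [] r
  | cons {r r' r'' : RegularExpression α} {a : α} {w : List α} :
      Deriv r a r' → Derivs r' w r'' → Derivs r (a :: w) r''

/-- The reachability set RS(r). -/
def RS {α : Type} (r : RegularExpression α) : Set (RegularExpression α) :=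
  {r' | Relation.ReflTransGen (fun s t => ∃ a, Deriv s a t) r r'}

/-- Syntactic size of a regular expression. -/
def rsize {α : Type} : RegularExpression α → ℕ
  | RegularExpression.zero => 1
  | RegularExpression.epsilon => 1
  | RegularExpression.char _ => 1
  | RegularExpression.plus r₁ r₂ => rsize r₁ + rsize r₂ + 1
  | RegularExpression.comp r₁ r₂ => rsize r₁ + rsize r₂ + 1
  | RegularExpression.star r => rsize r + 1

section Aux

variable {α : Type}

/-- Soundness of √. -/
lemma surd_nil {r : RegularExpression α} (h : Surd r) : [] ∈ r.matches' := by
  induction h with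
  | eps => exact rfl
  | star r => exact Language.nil_mem_kstar _
  | plusL _ ih => exact Or.inl ih
  | plusR _ ih => exact Or.inr ih
  | comp _ _ ih₁ ih₂ => exact ⟨[], ih₁, [], ih₂, rfl⟩

/-- Soundness of single steps. -/
lemma deriv_matches {r r' : RegularExpression α} {b : α}
    (h : Deriv r b r') : ∀ w, w ∈ r'.matches' → b :: w ∈ r.matches' := by
  induction h with
  | char a =>
    intro w hw
    have hw' : w = [] := hw
    subst hw'
    exact Set.mem_singleton _
  | plusL _ ih => exact fun w hw => Or.inl (ih w hw)
  | plusR _ ih => exact fun w hw => Or.inr (ih w hw)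
  | @compL r₁ r₂ r₁' a _ ih =>
    rintro w ⟨u, hu, v, hv, rfl⟩
    exact ⟨a :: u, ih u hu, v, hv, rfl⟩
  | @compR r₁ r₂ r₂' a hs _ ih =>
    intro w hw
    exact ⟨[], surd_nil hs, a :: w, ih w hw, rfl⟩
  | @star r r'' a _ ih =>
    rintro w ⟨u, hu, v, hv, rfl⟩
    have h1 : a :: u ∈ r.matches' := ih u hu
    have hv := Language.mem_kstar.mp hv
    obtain ⟨L, rfl, hL⟩ := hv
    show (a :: u) ++ L.flatten ∈ (RegularExpression.star r).matches'
    rw [matches'_star]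
    have heq : (a :: u) ++ L.flatten = ((a :: u) :: L).flatten := by simp
    rw [heq]
    refine Language.join_mem_kstar ?_
    intro y hy
    rcases List.mem_cons.mp hy with rfl | hy
    · exact h1
    · exact hL y hy

lemma derivs_matches {r r' : RegularExpression α} {w : List α}
    (h : Derivs r w r') (hs : Surd r') : w ∈ r.matches' := by
  induction h with
  | nil r => exact surd_nil hs
  | cons hd _ ih => exact deriv_matches hd _ (ih hs)

lemma derivs_nil_eq {r r' : RegularExpression α} (h : Derivs r [] r') : r' = r := by
  cases h; rfl

lemma derivs_compL {r₁ r₂ s : RegularExpression α} {u : List α}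
    (h : Derivs r₁ u s) : Derivs (r₁ * r₂) u (s * r₂) := by
  induction h with
  | nil => exact Derivs.nil _
  | cons hd _ ih => exact Derivs.cons (Deriv.compL hd) ih

lemma derivs_trans {r s t : RegularExpression α} {u v : List α}
    (h₁ : Derivs r u s) (h₂ : Derivs s v t) : Derivs r (u ++ v) t := by
  induction h₁ with
  | nil => exact h₂
  | cons hd _ ih => exact Derivs.cons hd (ih h₂)

lemma comp_glue {s r₂ t : RegularExpression α} {v : List α}
    (hs : Surd s) (h : Derivs r₂ v t) (ht : Surd t) :
    ∃ t', Derivs (s * r₂) v t' ∧ Surd t' := by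
  cases h with
  | nil => exact ⟨s * r₂, Derivs.nil _, Surd.comp hs ht⟩
  | cons hd htl => exact ⟨t, Derivs.cons (Deriv.compR hs hd) htl, ht⟩

/-- Completeness. -/
lemma matches_derivs {r : RegularExpression α} :
    ∀ w, w ∈ r.matches' → ∃ r', Derivs r w r' ∧ Surd r' := by
  induction r with
  | zero => intro w hw; exact absurd hw (by simp [matches'_zero])
  | epsilon =>
    intro w hw
    have : w = [] := hw
    subst this
    exact ⟨1, Derivs.nil _, Surd.eps⟩
  | char a =>
    intro w hw
    have : w = [a] := hw
    subst this
    exact ⟨1, Derivs.cons (Deriv.char a) (Derivs.nil _), Surd.eps⟩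
  | plus r₁ r₂ ih₁ ih₂ =>
    intro w hw
    rcases hw with hw | hw
    · obtain ⟨r', hd, hs⟩ := ih₁ w hw
      cases hd with
      | nil => exact ⟨r₁ + r₂, Derivs.nil _, Surd.plusL hs⟩
      | cons h1 h2 => exact ⟨r', Derivs.cons (Deriv.plusL h1) h2, hs⟩
    · obtain ⟨r', hd, hs⟩ := ih₂ w hw
      cases hd with
      | nil => exact ⟨r₁ + r₂, Derivs.nil _, Surd.plusR hs⟩
      | cons h1 h2 => exact ⟨r', Derivs.cons (Deriv.plusR h1) h2, hs⟩
  | comp r₁ r₂ ih₁ ih₂ =>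
    rintro w ⟨u, hu, v, hv, rfl⟩
    obtain ⟨s, hds, hss⟩ := ih₁ u hu
    obtain ⟨t, hdt, hst⟩ := ih₂ v hv
    obtain ⟨t', hd', hs'⟩ := comp_glue hss hdt hst
    exact ⟨t', derivs_trans (derivs_compL hds) hd', hs'⟩
  | star r ih =>
    intro w hw
    rw [matches'_star, Language.mem_kstar] at hw
    obtain ⟨L, rfl, hL⟩ := hw
    induction L with
    | nil => exact ⟨RegularExpression.star r, Derivs.nil _, Surd.star r⟩
    | cons u L ihL =>
      obtain ⟨r', hd', hs'⟩ := ihL (fun y hy => hL y (List.mem_cons_of_mem _ hy))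
      obtain ⟨s, hds, hss⟩ := ih u (hL u (List.mem_cons_self))
      cases hds with
      | nil =>
        exact ⟨r', by simpa using hd', hs'⟩
      | @cons _ t _ a u' h1 h2 =>
        obtain ⟨t', hg, hgs⟩ := comp_glue hss hd' hs'
        refine ⟨t', ?_, hgs⟩
        show Derivs (RegularExpression.star r) ((a :: u') ++ L.flatten) t'
        exact Derivs.cons (Deriv.star h1) (derivs_trans (derivs_compL h2) hg)

end Aux

section Fin

variable {α : Type}

/-- The (over-approximated) set of states reachable in at least one step. -/
def dl : RegularExpression α → List (RegularExpression α)
  | RegularExpression.zero => []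
  | RegularExpression.epsilon => []
  | RegularExpression.char _ => [1]
  | RegularExpression.plus r₁ r₂ => dl r₁ ++ dl r₂
  | RegularExpression.comp r₁ r₂ => (dl r₁).map (· * r₂) ++ dl r₂
  | RegularExpression.star r => (dl r).map (· * RegularExpression.star r)

lemma dl_length (r : RegularExpression α) : (dl r).length ≤ rsize r := by
  induction r with
  | zero => simp [dl, rsize]
  | epsilon => simp [dl, rsize]
  | char a => simp [dl, rsize]
  | plus r₁ r₂ ih₁ ih₂ => simp only [dl, rsize, List.length_append]; omega
  | comp r₁ r₂ ih₁ ih₂ =>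
    simp only [dl, rsize, List.length_append, List.length_map]; omega
  | star r ih => simp only [dl, rsize, List.length_map]; omega

lemma deriv_mem_dl {r r' : RegularExpression α} {a : α} (h : Deriv r a r') :
    r' ∈ dl r := by
  induction h with
  | char a => simp [dl]
  | plusL _ ih => exact List.mem_append_left _ ih
  | plusR _ ih => exact List.mem_append_right _ ih
  | compL _ ih => exact List.mem_append_left _ (List.mem_map_of_mem ih)
  | compR _ _ ih => exact List.mem_append_right _ ih
  | star _ ih => exact List.mem_map_of_mem ih

lemma dl_closed {r : RegularExpression α} :
    ∀ {s t : RegularExpression α} {a : α}, s ∈ dl r → Deriv s a t → t ∈ dl r := by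
  induction r with
  | zero => intro s t a hs; simp [dl] at hs
  | epsilon => intro s t a hs; simp [dl] at hs
  | char b =>
    intro s t a hs hd
    simp [dl] at hs
    subst hs
    cases hd
  | plus r₁ r₂ ih₁ ih₂ =>
    intro s t a hs hd
    rcases List.mem_append.mp hs with hs | hs
    · exact List.mem_append_left _ (ih₁ hs hd)
    · exact List.mem_append_right _ (ih₂ hs hd)
  | comp r₁ r₂ ih₁ ih₂ =>
    intro s t a hs hd
    rcases List.mem_append.mp hs with hs | hs
    · obtain ⟨s₁, hs₁, rfl⟩ := List.mem_map.mp hs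
      cases hd with
      | compL hd' => exact List.mem_append_left _ (List.mem_map_of_mem (ih₁ hs₁ hd'))
      | compR _ hd' => exact List.mem_append_right _ (deriv_mem_dl hd')
    · exact List.mem_append_right _ (ih₂ hs hd)
  | star r ih =>
    intro s t a hs hd
    obtain ⟨s₁, hs₁, rfl⟩ := List.mem_map.mp hs
    cases hd with
    | compL hd' => exact List.mem_map_of_mem (ih hs₁ hd')
    | compR _ hd' =>
      cases hd' with
      | star hd'' => exact List.mem_map_of_mem (deriv_mem_dl hd'')

lemma RS_subset (r : RegularExpression α) :
    RS r ⊆ insert r {s | s ∈ dl r} := by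
  intro x hx
  induction hx with
  | refl => exact Set.mem_insert _ _
  | tail _ hstep ih =>
    obtain ⟨a, hd⟩ := hstep
    rcases ih with rfl | ih
    · exact Set.mem_insert_of_mem _ (deriv_mem_dl hd)
    · exact Set.mem_insert_of_mem _ (dl_closed ih hd)

lemma RS_finite (r : RegularExpression α) : (RS r).Finite :=
  Set.Finite.subset ((List.finite_toSet (dl r)).insert r) (RS_subset r)

lemma RS_self (r : RegularExpression α) : r ∈ RS r := Relation.ReflTransGen.refl

lemma RS_trans {r s t : RegularExpression α} (hs : s ∈ RS r)
    (h : Relation.ReflTransGen (fun s t => ∃ a, Deriv s a t) s t) : t ∈ RS r :=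
  Relation.ReflTransGen.trans hs h

lemma derivs_rtg {r s : RegularExpression α} {w : List α} (h : Derivs r w s) :
    Relation.ReflTransGen (fun s t => ∃ a, Deriv s a t) r s := by
  induction h with
  | nil => exact Relation.ReflTransGen.refl
  | cons hd _ ih => exact Relation.ReflTransGen.head ⟨_, hd⟩ ih

lemma RS_deriv_closed {r s t : RegularExpression α} {a : α}
    (hs : s ∈ RS r) (h : Deriv s a t) : t ∈ RS r :=
  RS_trans hs (Relation.ReflTransGen.single ⟨a, h⟩)

lemma RS_ncard (r : RegularExpression α) : (RS r).ncard ≤ rsize r + 1 := by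
  classical
  have h1 : (RS r).ncard ≤ (insert r {s | s ∈ dl r}).ncard :=
    Set.ncard_le_ncard (RS_subset r) ((List.finite_toSet (dl r)).insert r)
  have h2 : (insert r {s | s ∈ dl r}).ncard ≤ {s | s ∈ dl r}.ncard + 1 :=
    Set.ncard_insert_le _ _
  have h3 : {s | s ∈ dl r}.ncard ≤ (dl r).length := by
    have : {s | s ∈ dl r} = ↑(dl r).toFinset := by ext x; simp
    rw [this, Set.ncard_coe_finset]
    exact (dl r).toFinset_card_le
  calc (RS r).ncard ≤ {s | s ∈ dl r}.ncard + 1 := le_trans h1 h2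
    _ ≤ (dl r).length + 1 := by omega
    _ ≤ rsize r + 1 := by have := dl_length r; omega

end Fin

section NFAsec

variable {α : Type}

/-- The SOS NFA for `r`, with state space `RS r`. -/
def Mnfa (r : RegularExpression α) : NFA α (RS r) where
  step := fun q a => {q' | Deriv q.1 a q'.1}
  start := {q | q.1 = r}
  accept := {q | Surd q.1}

lemma Mnfa_evalFrom (r : RegularExpression α) :
    ∀ (w : List α) (S : Set (RS r)) (q' : RS r),
      q' ∈ (Mnfa r).evalFrom S w ↔ ∃ q ∈ S, Derivs q.1 w q'.1 := by
  intro w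
  induction w with
  | nil =>
    intro S q'
    constructor
    · intro h
      exact ⟨q', h, Derivs.nil _⟩
    · rintro ⟨q, hq, hd⟩
      have := derivs_nil_eq hd
      have : q = q' := Subtype.ext this.symm
      exact this ▸ hq
  | cons a w ih =>
    intro S q'
    show q' ∈ (Mnfa r).evalFrom ((Mnfa r).stepSet S a) w ↔ _
    rw [ih]
    constructor
    · rintro ⟨q₁, hq₁, hd⟩
      rw [NFA.mem_stepSet] at hq₁
      obtain ⟨q, hq, hstep⟩ := hq₁
      exact ⟨q, hq, Derivs.cons hstep hd⟩
    · rintro ⟨q, hq, hd⟩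
      cases hd with
      | @cons _ t _ _ _ h1 h2 =>
        have ht : t ∈ RS r := RS_deriv_closed q.2 h1
        refine ⟨⟨t, ht⟩, ?_, h2⟩
        rw [NFA.mem_stepSet]
        exact ⟨q, hq, h1⟩

lemma Mnfa_accepts (r : RegularExpression α) : (Mnfa r).accepts = r.matches' := by
  ext w
  rw [NFA.mem_accepts]
  constructor
  · rintro ⟨q', hacc, heval⟩
    rw [Mnfa_evalFrom] at heval
    obtain ⟨q, hq, hd⟩ := heval
    have hqr : q.1 = r := hq
    rw [hqr] at hd
    exact derivs_matches hd hacc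
  · intro hw
    obtain ⟨s, hd, hs⟩ := matches_derivs w hw
    have hsRS : s ∈ RS r := derivs_rtg hd
    refine ⟨⟨s, hsRS⟩, hs, ?_⟩
    rw [Mnfa_evalFrom]
    exact ⟨⟨r, RS_self r⟩, rfl, hd⟩

end NFAsec

theorem regular_lang_small_nfa {α : Type} (L : Language α) (r : RegularExpression α)
    (hL : L = r.matches') :
    ∃ (Q : Type) (_ : Fintype Q) (M : NFA α Q),
      Fintype.card Q ≤ rsize r + 1 ∧ M.accepts = L := by
  classical
  have hfin : (RS r).Finite := RS_finite r
  haveI : Fintype (RS r) := hfin.fintype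
  refine ⟨RS r, inferInstance, Mnfa r, ?_, by rw [Mnfa_accepts, hL]⟩
  have hcard : Fintype.card (RS r) = (RS r).ncard := by
    rw [← Nat.card_coe_set_eq, Nat.card_eq_fintype_card]
  rw [hcard]
  exact RS_ncard r
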